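/- Let G be a finite 2-group, c ∈ G an element of order 4, and D a subgroup of G that is an extraspecial 2-group with center Z = ⟨c²⟩, such that c commutes with every element of D, G = ⟨c⟩D, and ⟨c⟩ ∩ D = Z. Then the poset of elementary abelian 2-subgroups A of G with Z < A is order-isomorphic to the poset of abelian subgroups H of D with Z < H (both posets ordered by inclusion). -/
import Mathlib
open scoped Pointwise

/-- A subgroup is elementary abelian for the prime `p` if it is abelian and
every element satisfies `a ^ p = 1`. -/
def IsElementaryAbelian (p : ℕ) {G : Type*} [Group G] (A : Subgroup G) : Prop :=
  (∀ a ∈ A, ∀ b ∈ A, Commute a b) ∧ ∀ a ∈ A, a ^ p = 1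

/-- A finite `p`-group is extraspecial if its center has order `p` and coincides with
its commutator subgroup and its Frattini subgroup. -/
def IsExtraspecial (p : ℕ) (G : Type*) [Group G] : Prop :=
  Nat.card (Subgroup.center G) = p ∧ Subgroup.center G = commutator G ∧
    Subgroup.center G = frattini G

private lemma aux_zpow_sq {G : Type*} [Group G] {z : G} (hz : z ^ 2 = 1) (k : ℤ) :
    (z ^ k) ^ 2 = 1 := by
  rw [← zpow_natCast (z ^ k) 2, ← zpow_mul, mul_comm, zpow_mul, zpow_natCast, hz, one_zpow]

private lemma aux_mem_zpowers_sq {G : Type*} [Group G] {z x : G} (hz : z ^ 2 = 1)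
    (hx : x ∈ Subgroup.zpowers z) : x = 1 ∨ x = z := by
  obtain ⟨k, rfl⟩ := hx
  rcases Int.even_or_odd k with ⟨m, rfl⟩ | ⟨m, rfl⟩
  · left
    show z ^ (m + m) = 1
    rw [show m + m = 2 * m by ring, zpow_mul, show ((2:ℤ)) = ((2:ℕ):ℤ) from rfl,
      zpow_natCast, hz, one_zpow]
  · right
    show z ^ (2 * m + 1) = z
    rw [zpow_add, zpow_one, zpow_mul, show ((2:ℤ)) = ((2:ℕ):ℤ) from rfl,
      zpow_natCast, hz, one_zpow, one_mul]

private lemma sq_mem_frattini {P : Type*} [Group P] [Finite P] (hP : IsPGroup 2 P) (x : P) :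
    x ^ 2 ∈ frattini P := by
  haveI : Fact (Nat.Prime 2) := ⟨Nat.prime_two⟩
  haveI : Group.IsNilpotent P := hP.isNilpotent
  have key : ∀ K : Subgroup P, IsCoatom K → x ^ 2 ∈ K := by
    intro K hK
    haveI : K.Normal :=
      Subgroup.NormalizerCondition.normal_of_coatom K normalizerCondition_of_isNilpotent hK
    set π := QuotientGroup.mk' K with hπ
    have hsurj : Function.Surjective π := QuotientGroup.mk'_surjective K
    have hQ : IsPGroup 2 (P ⧸ K) := hP.to_quotient K
    have hsimple : ∀ S : Subgroup (P ⧸ K), S = ⊥ ∨ S = ⊤ := by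
      intro S
      have hle : K ≤ S.comap π := by
        intro k hk
        have h1 : π k = 1 := (QuotientGroup.eq_one_iff k).mpr hk
        simpa [Subgroup.mem_comap, h1] using S.one_mem
      rcases eq_or_lt_of_le hle with h | h
      · left
        have hmc := Subgroup.map_comap_eq_self_of_surjective hsurj S
        rw [← hmc, ← h]
        ext y
        simp only [Subgroup.mem_map, Subgroup.mem_bot]
        constructor
        · rintro ⟨k, hk, rfl⟩
          exact (QuotientGroup.eq_one_iff k).mpr hk
        · rintro rfl; exact ⟨1, K.one_mem, map_one π⟩
      · right
        have := hK.2 _ h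
        rw [← Subgroup.map_comap_eq_self_of_surjective hsurj S, this]
        exact Subgroup.map_top_of_surjective π hsurj
    set y := π x with hy
    have hy2 : y ^ 2 = 1 := by
      rcases hsimple (Subgroup.zpowers (y ^ 2)) with h | h
      · have : y ^ 2 ∈ Subgroup.zpowers (y ^ 2) := Subgroup.mem_zpowers _
        rwa [h, Subgroup.mem_bot] at this
      · by_cases hy1 : y = 1
        · simp [hy1]
        · exfalso
          have hmem : y ∈ Subgroup.zpowers (y ^ 2) := by rw [h]; trivial
          obtain ⟨n, hn⟩ := hmem
          have h2n : y ^ (2 * n) = y := by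
            rw [zpow_mul, show ((2:ℤ)) = ((2:ℕ):ℤ) from rfl, zpow_natCast]
            exact hn
          have hone : y ^ (2 * n - 1) = 1 := by
            rw [zpow_sub, zpow_one, h2n, mul_inv_cancel]
          have hdvd : (orderOf y : ℤ) ∣ 2 * n - 1 := orderOf_dvd_iff_zpow_eq_one.mpr hone
          have h2 : 2 ∣ orderOf y := by
            obtain ⟨k, hk⟩ := hQ y
            have hd : orderOf y ∣ 2 ^ k := orderOf_dvd_of_pow_eq_one hk
            obtain ⟨m, hm, he⟩ := (Nat.dvd_prime_pow Nat.prime_two).mp hd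
            have hm0 : m ≠ 0 := by
              rintro rfl
              simp at he
              exact hy1 he
            rw [he]
            exact dvd_pow_self 2 hm0
          have : (2 : ℤ) ∣ 2 * n - 1 := dvd_trans (by exact_mod_cast h2) hdvd
          omega
    have hpix : π (x ^ 2) = 1 := by rw [map_pow]; exact hy2
    exact (QuotientGroup.eq_one_iff (x ^ 2)).mp hpix
  simp only [frattini, Order.radical, Subgroup.mem_iInf]
  exact fun K hK => key K hK

theorem central_product_upper_interval_iso_abelian_poset
    (G : Type*) [Group G] [Finite G] (hG : IsPGroup 2 G)
    (c : G) (hc : orderOf c = 4)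
    (D : Subgroup G) (hD : IsExtraspecial 2 ↥D)
    (hZD : Subgroup.centralizer (D : Set G) ⊓ D = Subgroup.zpowers (c ^ 2))
    (hcomm : ∀ d ∈ D, Commute c d)
    (hgen : Subgroup.zpowers c ⊔ D = ⊤)
    (hint : Subgroup.zpowers c ⊓ D = Subgroup.zpowers (c ^ 2)) :
    Nonempty
      ({A : Subgroup G // IsElementaryAbelian 2 A ∧ Subgroup.zpowers (c ^ 2) < A} ≃o
       {H : Subgroup G // H ≤ D ∧ (∀ a ∈ H, ∀ b ∈ H, Commute a b) ∧
          Subgroup.zpowers (c ^ 2) < H}) := by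
  set Z := Subgroup.zpowers (c ^ 2) with hZdef
  set C := Subgroup.zpowers c with hCdef
  have hc4 : c ^ 4 = 1 := by rw [← hc]; exact pow_orderOf_eq_one c
  have hc22 : (c ^ 2) ^ 2 = 1 := by rw [← pow_mul]; exact hc4
  -- c is central
  have hcent : ∀ g : G, Commute c g := by
    intro g
    have hsub : C ⊔ D ≤ Subgroup.centralizer {c} := by
      refine sup_le ?_ ?_
      · rintro x ⟨k, rfl⟩
        refine Subgroup.mem_centralizer_iff.mpr fun h hh => ?_
        rw [Set.mem_singleton_iff] at hh
        rw [hh]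
        exact ((Commute.refl c).zpow_right k).eq
      · intro d hd
        refine Subgroup.mem_centralizer_iff.mpr fun h hh => ?_
        rw [Set.mem_singleton_iff] at hh
        rw [hh]
        exact (hcomm d hd).eq
    have hg : g ∈ Subgroup.centralizer {c} := hsub (hgen ▸ Subgroup.mem_top g)
    exact (Subgroup.mem_centralizer_iff.mp hg) c rfl
  haveI hCn : C.Normal := by
    constructor
    rintro n ⟨k, rfl⟩ g
    have hcg : c ^ k * g = g * c ^ k := ((hcent g).zpow_left k).eq
    have : g * c ^ k * g⁻¹ = c ^ k := by rw [← hcg, mul_assoc, mul_inv_cancel, mul_one]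
    rw [this]
    exact Subgroup.zpow_mem _ (Subgroup.mem_zpowers c) k
  have hmemsup : ∀ (H : Subgroup G) (x : G), x ∈ C ⊔ H ↔ ∃ i : ℤ, ∃ h ∈ H, x = c ^ i * h := by
    intro H x
    constructor
    · intro hx
      have hx' : x ∈ (C : Set G) * (H : Set G) := by rw [← Subgroup.normal_mul]; exact hx
      obtain ⟨a, ha, b, hb, rfl⟩ := hx'
      obtain ⟨i, rfl⟩ := ha
      exact ⟨i, b, hb, rfl⟩
    · rintro ⟨i, h, hh, rfl⟩
      exact mul_mem (Subgroup.mem_sup_left (Subgroup.zpow_mem _ (Subgroup.mem_zpowers c) i))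
        (Subgroup.mem_sup_right hh)
  have hZC : Z ≤ C := by rw [← hint]; exact inf_le_left
  have hZD' : Z ≤ D := by rw [← hint]; exact inf_le_right
  -- elements of C of order dividing 2 lie in Z
  have hC2 : ∀ x ∈ C, x ^ 2 = 1 → x ∈ Z := by
    rintro x ⟨k, rfl⟩ h2
    have hzz : c ^ (k * 2) = 1 := by
      rw [zpow_mul, show ((2:ℤ)) = ((2:ℕ):ℤ) from rfl, zpow_natCast]; exact h2
    have hdvd : ((4 : ℕ) : ℤ) ∣ k * 2 := by
      rw [← hc]; exact orderOf_dvd_iff_zpow_eq_one.mpr hzz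
    obtain ⟨t, ht⟩ := hdvd
    have hk : k = 2 * t := by push_cast at ht; omega
    refine ⟨t, ?_⟩
    show (c ^ 2) ^ t = c ^ k
    rw [hk, ← zpow_natCast c 2, ← zpow_mul]
    norm_num
  -- squares of elements of D lie in Z
  have hsqD : ∀ d ∈ D, d ^ 2 ∈ Z := by
    intro d hd
    have hfr : (⟨d, hd⟩ : ↥D) ^ 2 ∈ frattini ↥D := sq_mem_frattini (hG.to_subgroup D) _
    rw [← hD.2.2] at hfr
    rw [← hZD]
    refine ⟨?_, pow_mem hd 2⟩
    refine Subgroup.mem_centralizer_iff.mpr fun g hg => ?_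
    have := (Subgroup.mem_center_iff.mp hfr) ⟨g, hg⟩
    have := congrArg (Subgroup.subtype D) this
    simpa using this
  -- commuting inside C ⊔ H for abelian H
  have habs : ∀ (H : Subgroup G), (∀ a ∈ H, ∀ b ∈ H, Commute a b) →
      ∀ x ∈ C ⊔ H, ∀ y ∈ C ⊔ H, Commute x y := by
    intro H hH x hx y hy
    obtain ⟨i, a, ha, rfl⟩ := (hmemsup H x).mp hx
    obtain ⟨j, b, hb, rfl⟩ := (hmemsup H y).mp hy
    have hab : Commute a b := hH a ha b hb
    have hci : ∀ g : G, Commute (c ^ i) g := fun g => (hcent g).zpow_left i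
    have hcj : ∀ g : G, Commute (c ^ j) g := fun g => (hcent g).zpow_left j
    exact ((hci (c ^ j)).mul_right (hci b)).mul_left ((hcj a).symm.mul_right hab)
  -- key membership transfer: if Z ≤ H ≤ D then (C ⊔ H) ∩ D = H
  have hsupD : ∀ (H : Subgroup G), H ≤ D → Z ≤ H → ∀ x, x ∈ C ⊔ H → x ∈ D → x ∈ H := by
    intro H hHD hZH x hx hxD
    obtain ⟨i, h, hh, rfl⟩ := (hmemsup H x).mp hx
    have hci : c ^ i ∈ D := by
      have : c ^ i = (c ^ i * h) * h⁻¹ := by group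
      rw [this]
      exact mul_mem hxD (inv_mem (hHD hh))
    have hciZ : c ^ i ∈ Z := by
      rw [← hint]
      exact ⟨Subgroup.zpow_mem _ (Subgroup.mem_zpowers c) i, hci⟩
    exact mul_mem (hZH hciZ) hh
  -- forward map
  set f : Subgroup G → Subgroup G := fun A => (C ⊔ A) ⊓ D with hfdef
  -- backward map
  let bwd : ∀ (H : Subgroup G), (∀ a ∈ H, ∀ b ∈ H, Commute a b) → Subgroup G := fun H hH =>
    { carrier := {x | x ∈ C ⊔ H ∧ x ^ 2 = 1}
      one_mem' := ⟨one_mem _, one_pow _⟩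
      mul_mem' := fun {x y} hx hy => ⟨mul_mem hx.1 hy.1, by
        rw [(habs H hH x hx.1 y hy.1).mul_pow, hx.2, hy.2, one_mul]⟩
      inv_mem' := fun {x} hx => ⟨inv_mem hx.1, by rw [inv_pow, hx.2, inv_one]⟩ }
  have bwd_mem : ∀ (H : Subgroup G) (hH) (x : G), x ∈ bwd H hH ↔ x ∈ C ⊔ H ∧ x ^ 2 = 1 :=
    fun _ _ _ => Iff.rfl
  -- forward map properties
  have f_ab : ∀ A : Subgroup G, (∀ a ∈ A, ∀ b ∈ A, Commute a b) →
      ∀ x ∈ f A, ∀ y ∈ f A, Commute x y := by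
    intro A hA x hx y hy
    exact habs A hA x (Subgroup.mem_inf.mp hx).1 y (Subgroup.mem_inf.mp hy).1
  have f_Zlt : ∀ A : Subgroup G, IsElementaryAbelian 2 A → Z < A → Z < f A := by
    intro A hA hZA
    have hle : Z ≤ f A := le_inf (le_trans hZC le_sup_left) hZD'
    obtain ⟨a, haA, haZ⟩ := SetLike.exists_of_lt hZA
    have haT : a ∈ C ⊔ D := hgen ▸ Subgroup.mem_top a
    obtain ⟨i, d, hd, rfl⟩ := (hmemsup D _).mp haT
    have hdm : d ∈ f A := by
      refine Subgroup.mem_inf.mpr ⟨?_, hd⟩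
      have : d = (c ^ i)⁻¹ * (c ^ i * d) := by group
      rw [this]
      exact mul_mem (Subgroup.mem_sup_left (inv_mem (Subgroup.zpow_mem _ (Subgroup.mem_zpowers c) i)))
        (Subgroup.mem_sup_right haA)
    have hdZ : d ∉ Z := by
      intro hdZ
      have hdC : d ∈ C := hZC hdZ
      have haC : c ^ i * d ∈ C := mul_mem (Subgroup.zpow_mem _ (Subgroup.mem_zpowers c) i) hdC
      exact haZ (hC2 _ haC (hA.2 _ haA))
    exact lt_of_le_of_ne hle (fun h => hdZ (h ▸ hdm))
  -- backward map properties
  have bwd_elem : ∀ (H : Subgroup G) (hH), IsElementaryAbelian 2 (bwd H hH) := by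
    intro H hH
    exact ⟨fun a ha b hb => habs H hH a ha.1 b hb.1, fun a ha => ha.2⟩
  have bwd_Zlt : ∀ (H : Subgroup G) (hHD : H ≤ D) (hH), Z < H → Z < bwd H hH := by
    intro H hHD hH hZH
    have hle : Z ≤ bwd H hH := by
      rintro z hz
      refine ⟨Subgroup.mem_sup_left (hZC hz), ?_⟩
      obtain ⟨k, rfl⟩ := hz
      exact aux_zpow_sq hc22 k
    obtain ⟨d, hdH, hdZ⟩ := SetLike.exists_of_lt hZH
    have hd2 : d ^ 2 ∈ Z := hsqD d (hHD hdH)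
    rcases aux_mem_zpowers_sq hc22 hd2 with h1 | h1
    · have hdm : d ∈ bwd H hH := ⟨Subgroup.mem_sup_right hdH, h1⟩
      exact lt_of_le_of_ne hle (fun h => hdZ (h ▸ hdm))
    · have hx : c * d ∈ bwd H hH := by
        refine ⟨mul_mem (Subgroup.mem_sup_left (Subgroup.mem_zpowers c))
          (Subgroup.mem_sup_right hdH), ?_⟩
        rw [(hcomm d (hHD hdH)).mul_pow, h1, ← pow_add]
        exact hc4
      have hxZ : c * d ∉ Z := by
        intro hxZ
        have hdC : d ∈ C := by
          have : d = c⁻¹ * (c * d) := by group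
          rw [this]
          exact mul_mem (inv_mem (Subgroup.mem_zpowers c)) (hZC hxZ)
        have : d ∈ Z := by rw [← hint]; exact ⟨hdC, hHD hdH⟩
        exact hdZ this
      exact lt_of_le_of_ne hle (fun h => hxZ (h ▸ hx))
  -- round trip 1 : f (bwd H) = H
  have rt1 : ∀ (H : Subgroup G) (hHD : H ≤ D) (hH), Z < H → f (bwd H hH) = H := by
    intro H hHD hH hZH
    ext x
    rw [Subgroup.mem_inf]
    constructor
    · rintro ⟨hx, hxD⟩
      obtain ⟨i, a, ha, rfl⟩ := (hmemsup _ x).mp hx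
      have haH : a ∈ C ⊔ H := ha.1
      have hxH : c ^ i * a ∈ C ⊔ H :=
        mul_mem (Subgroup.mem_sup_left (Subgroup.zpow_mem _ (Subgroup.mem_zpowers c) i)) haH
      exact hsupD H hHD (le_of_lt hZH) _ hxH hxD
    · intro hxH
      refine ⟨?_, hHD hxH⟩
      have hx2 : x ^ 2 ∈ Z := hsqD x (hHD hxH)
      rcases aux_mem_zpowers_sq hc22 hx2 with h1 | h1
      · exact Subgroup.mem_sup_right ⟨Subgroup.mem_sup_right hxH, h1⟩
      · have hcx : c * x ∈ bwd H hH := by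
          refine ⟨mul_mem (Subgroup.mem_sup_left (Subgroup.mem_zpowers c))
            (Subgroup.mem_sup_right hxH), ?_⟩
          rw [(hcomm x (hHD hxH)).mul_pow, h1, ← pow_add]
          exact hc4
        have : x = c⁻¹ * (c * x) := by group
        rw [this]
        exact mul_mem (Subgroup.mem_sup_left (inv_mem (Subgroup.mem_zpowers c)))
          (Subgroup.mem_sup_right hcx)
  -- round trip 2 : bwd (f A) = A
  have rt2 : ∀ (A : Subgroup G) (hA : IsElementaryAbelian 2 A) (hZA : Z < A) (hfab),
      bwd (f A) hfab = A := by
    intro A hA hZA hfab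
    ext x
    show (x ∈ C ⊔ f A ∧ x ^ 2 = 1) ↔ x ∈ A
    constructor
    · rintro ⟨hx, hx2⟩
      obtain ⟨i, a, ha, rfl⟩ := (hmemsup _ x).mp hx
      have haCA : a ∈ C ⊔ A := (Subgroup.mem_inf.mp ha).1
      have hxCA : c ^ i * a ∈ C ⊔ A :=
        mul_mem (Subgroup.mem_sup_left (Subgroup.zpow_mem _ (Subgroup.mem_zpowers c) i)) haCA
      obtain ⟨j, b, hb, he⟩ := (hmemsup A _).mp hxCA
      rw [he] at hx2 ⊢
      have hcb : Commute (c ^ j) b := (hcent b).zpow_left j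
      rw [hcb.mul_pow, hA.2 b hb, mul_one] at hx2
      have : c ^ j ∈ Z := hC2 _ (Subgroup.zpow_mem _ (Subgroup.mem_zpowers c) j) hx2
      exact mul_mem (le_of_lt hZA this) hb
    · intro hxA
      refine ⟨?_, hA.2 x hxA⟩
      have hxT : x ∈ C ⊔ D := hgen ▸ Subgroup.mem_top x
      obtain ⟨i, d, hd, rfl⟩ := (hmemsup D _).mp hxT
      have hdm : d ∈ f A := by
        refine Subgroup.mem_inf.mpr ⟨?_, hd⟩
        have : d = (c ^ i)⁻¹ * (c ^ i * d) := by group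
        rw [this]
        exact mul_mem (Subgroup.mem_sup_left (inv_mem (Subgroup.zpow_mem _ (Subgroup.mem_zpowers c) i)))
          (Subgroup.mem_sup_right hxA)
      exact mul_mem (Subgroup.mem_sup_left (Subgroup.zpow_mem _ (Subgroup.mem_zpowers c) i))
        (Subgroup.mem_sup_right hdm)
  -- monotonicity of bwd
  have bwd_mono : ∀ (H₁ H₂ : Subgroup G) (h1) (h2), H₁ ≤ H₂ → bwd H₁ h1 ≤ bwd H₂ h2 := by
    intro H₁ H₂ h1 h2 hle x hx
    exact ⟨(sup_le_sup_left hle C) hx.1, hx.2⟩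
  -- assemble
  refine ⟨{
    toFun := fun A => ⟨f A.1, inf_le_right, f_ab A.1 A.2.1.1, f_Zlt A.1 A.2.1 A.2.2⟩
    invFun := fun H => ⟨bwd H.1 H.2.2.1, bwd_elem H.1 H.2.2.1, bwd_Zlt H.1 H.2.1 H.2.2.1 H.2.2.2⟩
    left_inv := fun A => Subtype.ext (rt2 A.1 A.2.1 A.2.2 (f_ab A.1 A.2.1.1))
    right_inv := fun H => Subtype.ext (rt1 H.1 H.2.1 H.2.2.1 H.2.2.2)
    map_rel_iff' := ?_ }⟩
  intro A B
  simp only [Equiv.coe_fn_mk, Subtype.mk_le_mk]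
  constructor
  · intro h
    have h1 := rt2 A.1 A.2.1 A.2.2 (f_ab A.1 A.2.1.1)
    have h2 := rt2 B.1 B.2.1 B.2.2 (f_ab B.1 B.2.1.1)
    have h3 := bwd_mono (f A.1) (f B.1) (f_ab A.1 A.2.1.1) (f_ab B.1 B.2.1.1) h
    rw [h1, h2] at h3
    exact h3
  · intro h
    exact inf_le_inf_right D (sup_le_sup_left h C)
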